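/- Define, for an integer n ≥ 2 and an integer i with 0 ≤ i ≤ n, C̃_n(i) := n^{−2}·( 3i² − 3in + n²/2 + 2n·H_n − n/2 − 2i·H_i − 2(n−i)·H_{n−i} ), where H_m := ∑_{k=1}^{m} 1/k and H_0 := 0, and define C̃(x) := 1/2 − 3x(1−x) for x ∈ [0,1]. Then there exists a constant K > 0 such that for every integer n ≥ 2 and every x ∈ [0,1], |C̃_n(⌈nx⌉) − C̃(x)| ≤ (2·log n + K)/n. -/

import Mathlib

/-- The `m`-th harmonic number, with `H_0 = 0`. -/
noncomputable def harm (m : ℕ) : ℝ := ∑ k ∈ Finset.Icc 1 m, 1 / (k : ℝ)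

/-- The toll function `C̃_n(i)` of the recursive representation of the normalized
discrete cophenetic index of a Yule tree without root edge. -/
noncomputable def Ctilde (n i : ℕ) : ℝ :=
  (3 * (i : ℝ) ^ 2 - 3 * (i : ℝ) * (n : ℝ) + (n : ℝ) ^ 2 / 2 + 2 * (n : ℝ) * harm n -
      (n : ℝ) / 2 - 2 * (i : ℝ) * harm i - 2 * ((n : ℝ) - (i : ℝ)) * harm (n - i)) /
    (n : ℝ) ^ 2

lemma harm_eq (m : ℕ) : harm m = (harmonic m : ℝ) := by
  simp [harm, harmonic_eq_sum_Icc, one_div]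

lemma harm_nonneg (m : ℕ) : 0 ≤ harm m := by
  apply Finset.sum_nonneg; intro k _; positivity

lemma harm_mono {a b : ℕ} (h : a ≤ b) : harm a ≤ harm b := by
  apply Finset.sum_le_sum_of_subset_of_nonneg
  · exact Finset.Icc_subset_Icc_right h
  · intro k _ _; positivity

lemma harm_le (m : ℕ) : harm m ≤ 1 + Real.log m := by
  rw [harm_eq]; exact harmonic_le_one_add_log m

set_option maxHeartbeats 1000000 in
/-- Uniform approximation of the discrete toll function `C̃_n(⌈nx⌉)` by its limit
`C̃(x) = 1/2 − 3x(1−x)` at rate `(2 log n + K)/n`. -/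
theorem stmt16 :
    ∃ K : ℝ, 0 < K ∧ ∀ n : ℕ, 2 ≤ n → ∀ x : ℝ, x ∈ Set.Icc (0 : ℝ) 1 →
      |Ctilde n ⌈(n : ℝ) * x⌉₊ - (1 / 2 - 3 * x * (1 - x))| ≤
        (2 * Real.log n + K) / n := by
  refine ⟨6, by norm_num, ?_⟩
  intro n hn x hx
  obtain ⟨hx0, hx1⟩ := hx
  have hn0 : (0 : ℝ) < n := by positivity
  set i : ℕ := ⌈(n : ℝ) * x⌉₊ with hidef
  have hin : (i : ℝ) ≤ n := by
    have : (i : ℕ) ≤ n := Nat.ceil_le.mpr (by nlinarith)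
    exact_mod_cast this
  have hinn : i ≤ n := by exact_mod_cast hin
  have h1 : (n : ℝ) * x ≤ i := Nat.le_ceil _
  have h2 : (i : ℝ) ≤ n * x + 1 := by
    have := Nat.ceil_lt_add_one (by positivity : (0:ℝ) ≤ (n : ℝ) * x)
    linarith
  -- harmonic part
  have hHi : harm i ≤ harm n := harm_mono hinn
  have hHni : harm (n - i) ≤ harm n := harm_mono (Nat.sub_le n i)
  have hA0 : 0 ≤ (n : ℝ) * harm n - i * harm i - ((n : ℝ) - i) * harm (n - i) := by
    nlinarith [harm_nonneg i, harm_nonneg (n - i), Nat.cast_nonneg (α := ℝ) i]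
  have hA1 : (n : ℝ) * harm n - i * harm i - ((n : ℝ) - i) * harm (n - i) ≤ n * harm n := by
    nlinarith [harm_nonneg i, harm_nonneg (n - i), Nat.cast_nonneg (α := ℝ) i]
  have hHn : harm n ≤ 1 + Real.log n := harm_le n
  have hHn0 : 0 ≤ harm n := harm_nonneg n
  -- decomposition
  have hdecomp : Ctilde n i - (1 / 2 - 3 * x * (1 - x)) =
      (3 * ((i:ℝ)/n) ^ 2 - 3 * ((i:ℝ)/n) - (3 * x ^ 2 - 3 * x)) - 1 / (2 * n)
      + 2 * ((n : ℝ) * harm n - i * harm i - ((n : ℝ) - i) * harm (n - i)) / n ^ 2 := by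
    unfold Ctilde
    field_simp
    ring
  set t : ℝ := (i : ℝ) / n with ht
  have htx : x ≤ t := by rw [ht, le_div_iff₀ hn0]; linarith
  have htx2 : t ≤ x + 1 / n := by
    rw [ht, div_le_iff₀ hn0]; rw [add_mul, div_mul_cancel₀]; linarith; linarith
  have ht1 : t ≤ 1 := by rw [ht, div_le_one hn0]; exact hin
  have hterm1 : |3 * t ^ 2 - 3 * t - (3 * x ^ 2 - 3 * x)| ≤ 3 / (n:ℝ) := by
    have : 3 * t ^ 2 - 3 * t - (3 * x ^ 2 - 3 * x) = 3 * (t - x) * (t + x - 1) := by ring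
    rw [this, abs_mul, abs_mul]
    have h1' : |(3:ℝ)| = 3 := by norm_num
    have h2' : |t - x| ≤ 1 / n := by rw [abs_le]; constructor <;> linarith
    have h3' : |t + x - 1| ≤ 1 := by rw [abs_le]; constructor <;> linarith
    calc |(3:ℝ)| * |t - x| * |t + x - 1| ≤ 3 * (1/(n:ℝ)) * 1 := by
          apply mul_le_mul _ h3' (abs_nonneg _) (by positivity)
          rw [h1']; exact mul_le_mul_of_nonneg_left h2' (by norm_num)
      _ = 3 / (n:ℝ) := by ring
  have hterm3 : |2 * ((n : ℝ) * harm n - i * harm i - ((n : ℝ) - i) * harm (n - i)) / n ^ 2|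
      ≤ 2 * (1 + Real.log n) / n := by
    rw [abs_div, abs_of_nonneg (by positivity : (0:ℝ) ≤ (n:ℝ)^2),
      abs_of_nonneg (by linarith : (0:ℝ) ≤ 2 * ((n : ℝ) * harm n - i * harm i - ((n : ℝ) - i) * harm (n - i)))]
    rw [div_le_div_iff₀ (by positivity) hn0]
    have : (n:ℝ) * (1 + Real.log n) ≥ n * harm n := by nlinarith
    nlinarith
  have hlogn : 0 ≤ Real.log n := Real.log_nonneg (by exact_mod_cast Nat.one_le_of_lt hn)
  calc |Ctilde n i - (1 / 2 - 3 * x * (1 - x))|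
      ≤ |3 * t ^ 2 - 3 * t - (3 * x ^ 2 - 3 * x)| + |1 / (2 * (n:ℝ))|
        + |2 * ((n : ℝ) * harm n - i * harm i - ((n : ℝ) - i) * harm (n - i)) / n ^ 2| := by
        rw [hdecomp]
        exact (abs_add_le _ _).trans (add_le_add_left (abs_sub _ _) _)
    _ ≤ 3 / n + 1 / (2 * (n:ℝ)) + 2 * (1 + Real.log n) / n := by
        refine add_le_add (add_le_add hterm1 ?_) hterm3
        rw [abs_of_nonneg (by positivity)]
    _ ≤ (2 * Real.log n + 6) / n := by
        rw [div_add_div _ _ (by positivity) (by positivity), div_add_div _ _ (by positivity) (by positivity),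
          div_le_div_iff₀ (by positivity) hn0]
        ring_nf
        nlinarith
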